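/- In the one-state game with two actions, no DDR strategy (deterministic initialisation and outputs, randomised updates) is outcome-equivalent to the RDD strategy that initially picks uniformly between the pure strategy always playing a and the pure strategy always playing b: a DDR strategy plays a deterministic action at the first step, while the RDD strategy plays a and b each with probability 1/2 at the first step. -/

import Mathlib

open Filter
open scoped Classical

/-- A stochastic Mealy machine for the one-state game with two actions
(`true` = action a, `false` = action b). -/
structure OneMealy (n : ℕ) where
  init : Fin n → ℝ
  next : Fin n → Bool → ℝ
  up : Fin n → Bool → Fin n → ℝ

def Proper {n : ℕ} (N : OneMealy n) : Prop :=
  (∀ m, 0 ≤ N.init m) ∧ (∑ m, N.init m) = 1 ∧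
  (∀ m c, 0 ≤ N.next m c) ∧ (∀ m, ∑ c, N.next m c = 1) ∧
  (∀ m c m', 0 ≤ N.up m c m') ∧ ∀ m c, ∑ m', N.up m c m' = 1

def IsDirac {α : Type} (μ : α → ℝ) : Prop := ∃ x, ∀ y, μ y = if y = x then 1 else 0

def DetInit {n : ℕ} (N : OneMealy n) : Prop := IsDirac N.init
def DetNext {n : ℕ} (N : OneMealy n) : Prop := ∀ m, IsDirac (N.next m)
def DetUp {n : ℕ} (N : OneMealy n) : Prop := ∀ m c, IsDirac (N.up m c)

/-- Bayesian update of the memory distribution upon playing action `c`. -/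
noncomputable def ostep {n : ℕ} (N : OneMealy n) (μ : Fin n → ℝ) (c : Bool) :
    Fin n → ℝ :=
  if (∑ m', μ m' * N.next m' c) = 0 then fun m => ∑ m', μ m' * N.up m' c m
  else fun m => (∑ m', μ m' * N.up m' c m * N.next m' c) / (∑ m', μ m' * N.next m' c)

/-- Distribution over memory states after the word `w` of actions. -/
noncomputable def omemDist {n : ℕ} (N : OneMealy n) (w : List Bool) : Fin n → ℝ :=
  w.foldl (ostep N) N.init

/-- The strategy induced by the machine. -/
noncomputable def oStrat {n : ℕ} (N : OneMealy n) (w : List Bool) (c : Bool) : ℝ :=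
  ∑ m, omemDist N w m * N.next m c

/-- Probability of the cylinder of the finite action word `l` under strategy `σ`. -/
def cylProb (σ : List Bool → Bool → ℝ) (l : List Bool) : ℝ :=
  ∏ i ∈ Finset.range l.length, σ (l.take i) (l.getD i false)

/-- Outcome equivalence in the one-state game: identical cylinder probabilities. -/
noncomputable def OEquiv {n k : ℕ} (N : OneMealy n) (B : OneMealy k) : Prop :=
  ∀ w : List Bool, cylProb (oStrat N) w = cylProb (oStrat B) w

/-- Consistency of an action word with a strategy. -/
def consistentW (σ : List Bool → Bool → ℝ) (w : List Bool) : Prop :=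
  ∀ i < w.length, 0 < σ (w.take i) (w.getD i false)

/-- The RDD machine that initially mixes uniformly between the pure strategy
always playing `a` (memory state `0`) and the pure strategy always playing `b`
(memory state `1`); `true` = a, `false` = b. -/
noncomputable def N13 : OneMealy 2 where
  init := fun _ => 1 / 2
  next := fun m c => if c = decide (m = 0) then 1 else 0
  up := fun m _ m' => if m' = m then 1 else 0

/-- `N13` is a proper RDD machine, and no DDR strategy (deterministic
initialisation and outputs, randomised updates) is outcome-equivalent to it:
a DDR strategy plays a fixed action at the first step, whereas `N13` plays each
of `a`, `b` with probability `1/2` at the first step. -/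
theorem no_ddr_equivalent_to_uniform_mix :
    Proper N13 ∧ DetNext N13 ∧ DetUp N13 ∧
    ∀ (k : ℕ) (B : OneMealy k), Proper B → DetInit B → DetNext B →
      ¬ OEquiv N13 B := by
  refine ⟨⟨?_, ?_, ?_, ?_, ?_, ?_⟩, ?_, ?_, ?_⟩
  · intro m; norm_num [N13]
  · simp [N13, Fin.sum_univ_two]
  · intro m c; simp only [N13]; split <;> norm_num
  · intro m; simp [N13, Fintype.sum_bool]
  · intro m c m'; simp only [N13]; split <;> norm_num
  · intro m c
    rw [Fin.sum_univ_two]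
    fin_cases m <;> simp [N13]
  · intro m; exact ⟨decide (m = 0), fun c => by simp [N13]⟩
  · intro m c; exact ⟨m, fun m' => by simp [N13]⟩
  · rintro k B hP ⟨x, hx⟩ hDN hEq
    obtain ⟨y, hy⟩ := hDN x
    have h1 : cylProb (oStrat N13) [y] = 1 / 2 := by
      simp [cylProb, oStrat, omemDist, N13, Fin.sum_univ_two]
      cases y <;> norm_num
    have h2 : cylProb (oStrat B) [y] = 1 := by
      simp only [cylProb, List.length_singleton, Finset.prod_range_one,
        List.take_zero, List.getD, oStrat, omemDist, List.foldl_nil]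
      have : ∀ m, B.init m * B.next m y = if m = x then 1 else 0 := by
        intro m
        rw [hx m]
        by_cases h : m = x
        · subst h; rw [hy y]; simp
        · simp [h]
      have hg : (([y][0]?).getD false) = y := rfl
      rw [hg, Finset.sum_congr rfl fun m _ => this m]
      simp
    have := hEq [y]
    rw [h1, h2] at this
    norm_num at this
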